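/- Let x, x⁺, x⁻ be i.i.d. samples from a distribution D on X, let f : X → ℝ^d, let Σ be the covariance matrix of f(x) for x ∼ D, and let Z = ⟨f(x), f(x⁻) − f(x⁺)⟩. Then E[|Z|] ≤ √2 · √(‖Σ‖₂) · E_{x∼D}[‖f(x)‖], where ‖Σ‖₂ is the operator (spectral) norm of Σ. -/

import Mathlib

open RealInnerProductSpace

/-- Weighted Cauchy–Schwarz: if weights sum to 1, `∑ w|a| ≤ √(∑ w a²)`. -/
lemma sum_weight_abs_le_sqrt {ι : Type*} [Fintype ι] (w a : ι → ℝ)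
    (hw : ∀ i, 0 ≤ w i) (hw1 : ∑ i, w i = 1) :
    ∑ i, w i * |a i| ≤ Real.sqrt (∑ i, w i * (a i) ^ 2) := by
  have key := Finset.sum_mul_sq_le_sq_mul_sq Finset.univ
      (fun i => Real.sqrt (w i)) (fun i => Real.sqrt (w i) * |a i|)
  have h1 : ∀ i : ι, Real.sqrt (w i) * (Real.sqrt (w i) * |a i|) = w i * |a i| := by
    intro i
    rw [← mul_assoc, Real.mul_self_sqrt (hw i)]
  have h2 : ∀ i : ι, Real.sqrt (w i) ^ 2 = w i := fun i => Real.sq_sqrt (hw i)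
  have h3 : ∀ i : ι, (Real.sqrt (w i) * |a i|) ^ 2 = w i * (a i) ^ 2 := by
    intro i
    rw [mul_pow, h2, sq_abs]
  simp only [h1, h2, h3, hw1, one_mul] at key
  have hnn : 0 ≤ ∑ i, w i * |a i| :=
    Finset.sum_nonneg fun i _ => mul_nonneg (hw i) (abs_nonneg _)
  calc ∑ i, w i * |a i| = Real.sqrt ((∑ i, w i * |a i|) ^ 2) := by
        rw [Real.sqrt_sq hnn]
    _ ≤ Real.sqrt (∑ i, w i * (a i) ^ 2) := Real.sqrt_le_sqrt key

/-- if `x, x⁺, x⁻` are i.i.d. from `D` (here a finitely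
supported distribution given by weights `p`) and
`Z = ⟨f(x), f(x⁻) − f(x⁺)⟩`, then
`E[|Z|] ≤ √2 · √(‖Σ‖₂) · E[‖f(x)‖]`, where `Σ` is the covariance matrix of
`f(x)` and `‖Σ‖₂` its operator norm. -/
theorem abs_inner_diff_expectation_le
    {d : ℕ} {X : Type*} [Fintype X]
    (p : X → ℝ) (hp0 : ∀ x, 0 ≤ p x) (hp1 : ∑ x, p x = 1)
    (f : X → EuclideanSpace ℝ (Fin d))
    (μ : EuclideanSpace ℝ (Fin d)) (hμ : μ = ∑ x, p x • f x)
    (Sig : Matrix (Fin d) (Fin d) ℝ)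
    (hSig : ∀ i j, Sig i j = ∑ x, p x * ((f x i - μ i) * (f x j - μ j))) :
    (∑ x, ∑ xp, ∑ xm, p x * p xp * p xm * |⟪f x, f xm - f xp⟫|)
      ≤ Real.sqrt 2 *
        Real.sqrt ‖LinearMap.toContinuousLinearMap (Matrix.toEuclideanLin Sig)‖ *
        ∑ x, p x * ‖f x‖ := by
  set A := LinearMap.toContinuousLinearMap (Matrix.toEuclideanLin Sig) with hA
  have hAnn : (0:ℝ) ≤ ‖A‖ := norm_nonneg _
  -- pointwise bound
  have key : ∀ x : X,
      ∑ xp, ∑ xm, p xp * p xm * |⟪f x, f xm - f xp⟫| ≤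
        Real.sqrt 2 * Real.sqrt ‖A‖ * ‖f x‖ := by
    intro x
    set u := f x with hu
    set g : X → ℝ := fun y => ⟪u, f y⟫ with hg
    set m : ℝ := ⟪u, μ⟫ with hm
    -- mean of g
    have hmg : ∑ y, p y * g y = m := by
      rw [hm, hμ, inner_sum]
      exact Finset.sum_congr rfl fun y _ => by
        rw [hg, real_inner_smul_right]
    -- inner products as sums of coordinates
    have hginner : ∀ y, g y = ∑ i, u i * f y i := fun y => by
      simp [hg, PiLp.inner_apply]
      exact Finset.sum_congr rfl fun i _ => mul_comm _ _
    have hminner : m = ∑ i, u i * μ i := by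
      simp [hm, PiLp.inner_apply]
      exact Finset.sum_congr rfl fun i _ => mul_comm _ _
    -- the quadratic form
    have hQ : ⟪u, A u⟫ = ∑ y, p y * (g y - m) ^ 2 := by
      have hAu : ∀ i, (A u) i = ∑ j, Sig i j * u j := by
        intro i
        simp [hA, Matrix.toEuclideanLin_apply, Matrix.mulVec, dotProduct]
      rw [PiLp.inner_apply]
      simp only [RCLike.inner_apply, conj_trivial]
      rw [show (∑ i, (A u) i * u i) = ∑ i, u i * (A u) i from
        Finset.sum_congr rfl fun i _ => mul_comm _ _]
      calc ∑ i, u i * (A u) i = ∑ i, ∑ j, u i * (Sig i j * u j) := by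
            refine Finset.sum_congr rfl fun i _ => ?_
            rw [hAu i, Finset.mul_sum]
        _ = ∑ i, ∑ j, ∑ y, p y * ((u i * (f y i - μ i)) * (u j * (f y j - μ j))) := by
            refine Finset.sum_congr rfl fun i _ => Finset.sum_congr rfl fun j _ => ?_
            rw [hSig i j, Finset.sum_mul, Finset.mul_sum]
            exact Finset.sum_congr rfl fun y _ => by ring
        _ = ∑ i, ∑ y, ∑ j, p y * ((u i * (f y i - μ i)) * (u j * (f y j - μ j))) :=
            Finset.sum_congr rfl fun i _ => Finset.sum_comm
        _ = ∑ y, ∑ i, ∑ j, p y * ((u i * (f y i - μ i)) * (u j * (f y j - μ j))) :=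
            Finset.sum_comm
        _ = ∑ y, p y * ((∑ i, u i * (f y i - μ i)) * (∑ j, u j * (f y j - μ j))) := by
            refine Finset.sum_congr rfl fun y _ => ?_
            rw [Finset.sum_mul_sum, Finset.mul_sum]
            refine Finset.sum_congr rfl fun i _ => ?_
            rw [Finset.mul_sum]
        _ = ∑ y, p y * (g y - m) ^ 2 := by
            refine Finset.sum_congr rfl fun y _ => ?_
            have : ∑ i, u i * (f y i - μ i) = g y - m := by
              rw [hginner y, hminner, ← Finset.sum_sub_distrib]
              exact Finset.sum_congr rfl fun i _ => by ring
            rw [this]; ring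
    -- variance bound via operator norm
    have hQle : ∑ y, p y * (g y - m) ^ 2 ≤ ‖A‖ * ‖u‖ ^ 2 := by
      rw [← hQ]
      calc ⟪u, A u⟫ ≤ ‖u‖ * ‖A u‖ := real_inner_le_norm _ _
        _ ≤ ‖u‖ * (‖A‖ * ‖u‖) := by
            exact mul_le_mul_of_nonneg_left (A.le_opNorm u) (norm_nonneg u)
        _ = ‖A‖ * ‖u‖ ^ 2 := by ring
    -- second moment identity: E[(g xm - g xp)^2] = 2 Var
    have hT : ∑ xp, ∑ xm, (p xp * p xm) * (g xm - g xp) ^ 2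
        = 2 * ∑ y, p y * (g y - m) ^ 2 := by
      have expand : ∀ xp xm : X, (p xp * p xm) * (g xm - g xp) ^ 2 =
          p xp * (p xm * (g xm) ^ 2) - 2 * ((p xp * g xp) * (p xm * g xm))
            + (p xp * (g xp) ^ 2) * p xm := fun xp xm => by ring
      simp only [expand]
      rw [Finset.sum_comm (s := Finset.univ) (t := Finset.univ)
        (f := fun xp xm => p xp * (p xm * (g xm)^2) - 2 * ((p xp * g xp) * (p xm * g xm))
            + (p xp * (g xp)^2) * p xm)]
      simp only [Finset.sum_add_distrib, Finset.sum_sub_distrib,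
        ← Finset.mul_sum, ← Finset.sum_mul, hp1, hmg]
      have expand2 : ∀ y : X, p y * (g y - m) ^ 2 =
          p y * (g y) ^ 2 - 2 * m * (p y * g y) + m ^ 2 * p y := fun y => by ring
      simp only [expand2]
      simp only [Finset.sum_add_distrib, Finset.sum_sub_distrib,
        ← Finset.mul_sum, ← Finset.sum_mul, hp1, hmg]
      ring
    -- Cauchy–Schwarz over pairs
    have hCS : ∑ xp, ∑ xm, p xp * p xm * |g xm - g xp| ≤
        Real.sqrt (∑ xp, ∑ xm, (p xp * p xm) * (g xm - g xp) ^ 2) := by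
      have := sum_weight_abs_le_sqrt (ι := X × X)
        (fun q => p q.1 * p q.2) (fun q => g q.2 - g q.1)
        (fun q => mul_nonneg (hp0 _) (hp0 _))
        (by rw [Fintype.sum_prod_type]
            simp only [← Finset.mul_sum, hp1, mul_one])
      rw [Fintype.sum_prod_type, Fintype.sum_prod_type] at this
      exact this
    calc ∑ xp, ∑ xm, p xp * p xm * |⟪f x, f xm - f xp⟫|
        = ∑ xp, ∑ xm, p xp * p xm * |g xm - g xp| := by
          refine Finset.sum_congr rfl fun xp _ => Finset.sum_congr rfl fun xm _ => ?_
          rw [hg]; rw [inner_sub_right]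
      _ ≤ Real.sqrt (∑ xp, ∑ xm, (p xp * p xm) * (g xm - g xp) ^ 2) := hCS
      _ = Real.sqrt (2 * ∑ y, p y * (g y - m) ^ 2) := by rw [hT]
      _ ≤ Real.sqrt (2 * (‖A‖ * ‖u‖ ^ 2)) := by
          apply Real.sqrt_le_sqrt
          have := hQle
          nlinarith
      _ = Real.sqrt 2 * Real.sqrt ‖A‖ * ‖f x‖ := by
          rw [Real.sqrt_mul (by norm_num), Real.sqrt_mul hAnn,
            Real.sqrt_sq (norm_nonneg u), hu]
          ring
  calc (∑ x, ∑ xp, ∑ xm, p x * p xp * p xm * |⟪f x, f xm - f xp⟫|)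
      = ∑ x, p x * ∑ xp, ∑ xm, p xp * p xm * |⟪f x, f xm - f xp⟫| := by
        refine Finset.sum_congr rfl fun x _ => ?_
        rw [Finset.mul_sum]
        refine Finset.sum_congr rfl fun xp _ => ?_
        rw [Finset.mul_sum]
        refine Finset.sum_congr rfl fun xm _ => ?_
        ring
    _ ≤ ∑ x, p x * (Real.sqrt 2 * Real.sqrt ‖A‖ * ‖f x‖) := by
        refine Finset.sum_le_sum fun x _ => mul_le_mul_of_nonneg_left (key x) (hp0 x)
    _ = Real.sqrt 2 * Real.sqrt ‖A‖ * ∑ x, p x * ‖f x‖ := by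
        rw [Finset.mul_sum]
        exact Finset.sum_congr rfl fun x _ => by ring
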